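/- Let X and Y be nonempty compact convex subsets of Hausdorff real topological vector spaces and let g : X×Y→ℝ be continuous, quasi-concave in its first argument for every fixed second argument, and quasi-convex in its second argument for every fixed first argument. Then the zero-sum game (X,Y,g) is feasible. -/

import Mathlib

open Set

section Helpers

/-- A preconnected set contained in the union of two disjoint compact sets (in a T2 space)
is contained in one of them. -/
lemma preconn_split {γ : Type*} [TopologicalSpace γ] [T2Space γ] {s A B : Set γ}
    (hs : IsPreconnected s) (hA : IsCompact A) (hB : IsCompact B) (hAB : Disjoint A B)
    (hsub : s ⊆ A ∪ B) : s ⊆ A ∨ s ⊆ B := by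
  obtain ⟨U, V, hU, hV, hAU, hBV, hUV⟩ := SeparatedNhds.of_isCompact_isCompact hA hB hAB
  rcases hs.subset_or_subset hU hV hUV
      (hsub.trans (Set.union_subset_union hAU hBV)) with h | h
  · left
    intro x hx
    rcases hsub hx with hxA | hxB
    · exact hxA
    · exact absurd (Set.mem_inter (h hx) (hBV hxB)) (by
        intro hmem
        exact (hUV.le_bot hmem).elim)
  · right
    intro x hx
    rcases hsub hx with hxA | hxB
    · exact absurd (Set.mem_inter (hAU hxA) (h hx)) (by
        intro hmem
        exact (hUV.le_bot hmem).elim)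
    · exact hxB

lemma isCompact_segment' {F : Type*} [AddCommGroup F] [Module ℝ F] [TopologicalSpace F]
    [IsTopologicalAddGroup F] [ContinuousSMul ℝ F] (y1 y2 : F) :
    IsCompact (segment ℝ y1 y2) := by
  rw [segment_eq_image]
  exact isCompact_Icc.image
    (((continuous_const.sub continuous_id).smul continuous_const).add
      (continuous_id.smul continuous_const))

/-- The set of points in `T` over which `g` exceeds `c` for some `x ∈ A` is compact. -/
lemma compact_slice {E F : Type*} [TopologicalSpace E] [TopologicalSpace F]
    [T2Space E] [T2Space F]
    {A : Set E} {T : Set F} (hA : IsCompact A) (hT : IsCompact T)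
    {g : E → F → ℝ} (hg : ContinuousOn (fun p : E × F => g p.1 p.2) (A ×ˢ T)) (c : ℝ) :
    IsCompact {y ∈ T | ∃ x ∈ A, c ≤ g x y} := by
  have hK : IsClosed ((A ×ˢ T) ∩ (fun p : E × F => g p.1 p.2) ⁻¹' (Ici c)) :=
    hg.preimage_isClosed_of_isClosed ((hA.isClosed).prod (hT.isClosed)) isClosed_Ici
  have hKc : IsCompact ((A ×ˢ T) ∩ (fun p : E × F => g p.1 p.2) ⁻¹' (Ici c)) :=
    (hA.prod hT).of_isClosed_subset hK Set.inter_subset_left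
  have heq : {y ∈ T | ∃ x ∈ A, c ≤ g x y} =
      Prod.snd '' ((A ×ˢ T) ∩ (fun p : E × F => g p.1 p.2) ⁻¹' (Ici c)) := by
    ext y
    constructor
    · rintro ⟨hyT, x, hxA, hc⟩
      exact ⟨(x, y), ⟨⟨hxA, hyT⟩, hc⟩, rfl⟩
    · rintro ⟨⟨x, y'⟩, ⟨⟨hxA, hyT⟩, hc⟩, rfl⟩
      exact ⟨hyT, x, hxA, hc⟩
  rw [heq]
  exact hKc.image continuous_snd

end Helpers

section Komiya

variable {E F : Type*}
    [AddCommGroup E] [Module ℝ E] [TopologicalSpace E]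
    [IsTopologicalAddGroup E] [ContinuousSMul ℝ E] [T2Space E]
    [AddCommGroup F] [Module ℝ F] [TopologicalSpace F]
    [IsTopologicalAddGroup F] [ContinuousSMul ℝ F] [T2Space F]

/-- continuity of a slice in the first variable -/
lemma cont_fst {X : Set E} {Y : Set F} {g : E → F → ℝ}
    (hg : ContinuousOn (fun p : E × F => g p.1 p.2) (X ×ˢ Y)) {y : F} (hy : y ∈ Y) :
    ContinuousOn (fun x => g x y) X := by
  have := hg.comp ((continuous_id.prodMk continuous_const).continuousOn
    (s := X) (f := fun x : E => (x, y))) (fun x hx => ⟨hx, hy⟩)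
  exact this

lemma cont_snd {X : Set E} {Y : Set F} {g : E → F → ℝ}
    (hg : ContinuousOn (fun p : E × F => g p.1 p.2) (X ×ˢ Y)) {x : E} (hx : x ∈ X) :
    ContinuousOn (fun y => g x y) Y := by
  have := hg.comp ((continuous_const.prodMk continuous_id).continuousOn
    (s := Y) (f := fun y : F => (x, y))) (fun y hy => ⟨hx, hy⟩)
  exact this

/-- Komiya's two-point lemma. -/
lemma komiya_two_point {X : Set E} {Y : Set F}
    (hXcomp : IsCompact X) (hYconv : Convex ℝ Y)
    {g : E → F → ℝ} (hg : ContinuousOn (fun p : E × F => g p.1 p.2) (X ×ˢ Y))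
    (hsup : ∀ y ∈ Y, ∀ r : ℝ, Convex ℝ {x ∈ X | r ≤ g x y})
    (hsub : ∀ x ∈ X, ∀ y1 ∈ Y, ∀ y2 ∈ Y, ∀ z ∈ segment ℝ y1 y2,
      g x z ≤ max (g x y1) (g x y2))
    {α β : ℝ} (hβα : β < α) (hP : ∀ y ∈ Y, ∃ x ∈ X, α < g x y)
    {y1 y2 : F} (hy1 : y1 ∈ Y) (hy2 : y2 ∈ Y) :
    ∃ x ∈ X, β < g x y1 ∧ β < g x y2 := by
  by_contra hcon
  push_neg at hcon
  set β' : ℝ := (β + α) / 2 with hβ'def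
  have hββ' : β < β' := by simp only [hβ'def]; linarith
  have hβ'α : β' < α := by simp only [hβ'def]; linarith
  set A1 : Set E := {x ∈ X | β' ≤ g x y1} with hA1def
  set A2 : Set E := {x ∈ X | β' ≤ g x y2} with hA2def
  have hA1closed : IsClosed A1 := by
    have := (cont_fst hg hy1).preimage_isClosed_of_isClosed hXcomp.isClosed
      (isClosed_Ici (a := β'))
    exact this
  have hA2closed : IsClosed A2 := by
    have := (cont_fst hg hy2).preimage_isClosed_of_isClosed hXcomp.isClosed
      (isClosed_Ici (a := β'))
    exact this
  have hA1comp : IsCompact A1 := hXcomp.of_isClosed_subset hA1closed (sep_subset _ _)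
  have hA2comp : IsCompact A2 := hXcomp.of_isClosed_subset hA2closed (sep_subset _ _)
  have hA12 : Disjoint A1 A2 := by
    rw [Set.disjoint_left]
    rintro x ⟨hxX, h1⟩ ⟨_, h2⟩
    have := hcon x hxX (by linarith)
    linarith
  set seg : Set F := segment ℝ y1 y2 with hsegdef
  have hsegY : seg ⊆ Y := hYconv.segment_subset hy1 hy2
  have hsegcomp : IsCompact seg := isCompact_segment' y1 y2
  -- each C_z lies in A1 ∪ A2
  have hCz : ∀ z ∈ seg, {x ∈ X | β' ≤ g x z} ⊆ A1 ∪ A2 := by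
    rintro z hz x ⟨hxX, hxz⟩
    have hmax := hsub x hxX y1 hy1 y2 hy2 z hz
    rcases le_max_iff.1 (le_trans hxz hmax) with h | h
    · exact Or.inl ⟨hxX, h⟩
    · exact Or.inr ⟨hxX, h⟩
  set S1 : Set F := {z ∈ seg | ∃ x ∈ A1, β' ≤ g x z} with hS1def
  set S2 : Set F := {z ∈ seg | ∃ x ∈ A2, β' ≤ g x z} with hS2def
  have hgseg1 : ContinuousOn (fun p : E × F => g p.1 p.2) (A1 ×ˢ seg) :=
    hg.mono (Set.prod_mono (sep_subset _ _) hsegY)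
  have hgseg2 : ContinuousOn (fun p : E × F => g p.1 p.2) (A2 ×ˢ seg) :=
    hg.mono (Set.prod_mono (sep_subset _ _) hsegY)
  have hS1comp : IsCompact S1 := compact_slice hA1comp hsegcomp hgseg1 β'
  have hS2comp : IsCompact S2 := compact_slice hA2comp hsegcomp hgseg2 β'
  have hcover : seg ⊆ S1 ∪ S2 := by
    intro z hz
    obtain ⟨x, hxX, hgt⟩ := hP z (hsegY hz)
    have hge : β' ≤ g x z := le_of_lt (lt_of_lt_of_le hβ'α hgt.le)
    rcases hCz z hz ⟨hxX, hge⟩ with h | h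
    · exact Or.inl ⟨hz, x, h, hge⟩
    · exact Or.inr ⟨hz, x, h, hge⟩
  have hdisj : Disjoint S1 S2 := by
    rw [Set.disjoint_left]
    rintro z ⟨hz, x1, hx1A, hx1z⟩ ⟨_, x2, hx2A, hx2z⟩
    have hCconv : Convex ℝ {x ∈ X | β' ≤ g x z} := hsup z (hsegY hz) β'
    have hCpre : IsPreconnected {x ∈ X | β' ≤ g x z} := hCconv.isPreconnected
    have hx1C : x1 ∈ {x ∈ X | β' ≤ g x z} := ⟨hx1A.1, hx1z⟩
    have hx2C : x2 ∈ {x ∈ X | β' ≤ g x z} := ⟨hx2A.1, hx2z⟩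
    rcases preconn_split hCpre hA1comp hA2comp hA12 (hCz z hz) with h | h
    · exact Set.disjoint_left.1 hA12 (h hx2C) hx2A
    · exact Set.disjoint_left.1 hA12 hx1A (h hx1C)
  have hy1S1 : y1 ∈ S1 := by
    obtain ⟨x, hxX, hgt⟩ := hP y1 hy1
    exact ⟨left_mem_segment ℝ y1 y2, x, ⟨hxX, (hβ'α.trans hgt).le⟩, (hβ'α.trans hgt).le⟩
  have hy2S2 : y2 ∈ S2 := by
    obtain ⟨x, hxX, hgt⟩ := hP y2 hy2
    exact ⟨right_mem_segment ℝ y1 y2, x, ⟨hxX, (hβ'α.trans hgt).le⟩, (hβ'α.trans hgt).le⟩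
  have hsegpre : IsPreconnected seg := (convex_segment y1 y2).isPreconnected
  rcases preconn_split hsegpre hS1comp hS2comp hdisj hcover with h | h
  · exact Set.disjoint_left.1 hdisj (h (right_mem_segment ℝ y1 y2)) hy2S2
  · exact Set.disjoint_left.1 hdisj hy1S1 (h (left_mem_segment ℝ y1 y2))

/-- Komiya's finite intersection lemma, by induction on a finite set. -/
lemma komiya_finset {Y : Set F} (hYconv : Convex ℝ Y) (g : E → F → ℝ) (S : Finset F) :
    ∀ (X : Set E), X.Nonempty → IsCompact X →
    ContinuousOn (fun p : E × F => g p.1 p.2) (X ×ˢ Y) →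
    (∀ y ∈ Y, ∀ r : ℝ, Convex ℝ {x ∈ X | r ≤ g x y}) →
    (∀ x ∈ X, ∀ y1 ∈ Y, ∀ y2 ∈ Y, ∀ z ∈ segment ℝ y1 y2,
      g x z ≤ max (g x y1) (g x y2)) →
    ∀ α β : ℝ, β < α → (∀ y ∈ Y, ∃ x ∈ X, α < g x y) → (↑S ⊆ Y) →
    ∃ x ∈ X, ∀ y ∈ S, β < g x y := by
  classical
  induction S using Finset.induction_on with
  | empty =>
    intro X hne _ _ _ _ α β _ _ _
    exact ⟨hne.some, hne.some_mem, by simp⟩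
  | insert y0 S hy0S IH =>
    intro X hne hcomp hg hsup hsub α β hβα hP hSY
    have hy0Y : y0 ∈ Y := hSY (Finset.mem_coe.2 (Finset.mem_insert_self y0 S))
    set δ : ℝ := (β + α) / 2 with hδdef
    have hβδ : β < δ := by simp only [hδdef]; linarith
    have hδα : δ < α := by simp only [hδdef]; linarith
    set X' : Set E := {x ∈ X | δ ≤ g x y0} with hX'def
    have hX'sub : X' ⊆ X := sep_subset _ _
    have hP' : ∀ y ∈ Y, ∃ x ∈ X', δ < g x y := by
      intro y hy
      obtain ⟨x, hxX, h1, h2⟩ := komiya_two_point hcomp hYconv hg hsup hsub hδα hP hy hy0Y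
      exact ⟨x, ⟨hxX, h2.le⟩, h1⟩
    have hX'ne : X'.Nonempty := by
      obtain ⟨x, hx, _⟩ := hP' y0 hy0Y
      exact ⟨x, hx⟩
    have hX'closed : IsClosed X' := by
      have := (cont_fst hg hy0Y).preimage_isClosed_of_isClosed hcomp.isClosed
        (isClosed_Ici (a := δ))
      exact this
    have hX'comp : IsCompact X' := hcomp.of_isClosed_subset hX'closed hX'sub
    have hg' : ContinuousOn (fun p : E × F => g p.1 p.2) (X' ×ˢ Y) :=
      hg.mono (Set.prod_mono hX'sub subset_rfl)
    have hsup' : ∀ y ∈ Y, ∀ r : ℝ, Convex ℝ {x ∈ X' | r ≤ g x y} := by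
      intro y hy r
      have heq : {x ∈ X' | r ≤ g x y} = {x ∈ X | r ≤ g x y} ∩ {x ∈ X | δ ≤ g x y0} := by
        ext x; simp only [hX'def, Set.mem_setOf_eq, Set.mem_sep_iff, Set.mem_inter_iff]; tauto
      rw [heq]
      exact (hsup y hy r).inter (hsup y0 hy0Y δ)
    have hsub' : ∀ x ∈ X', ∀ y1 ∈ Y, ∀ y2 ∈ Y, ∀ z ∈ segment ℝ y1 y2,
        g x z ≤ max (g x y1) (g x y2) := fun x hx => hsub x (hX'sub hx)
    obtain ⟨x, hxX', hx⟩ := IH X' hX'ne hX'comp hg' hsup' hsub' δ β hβδ hP'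
      (fun y hy => hSY (Finset.mem_coe.2 (Finset.mem_insert_of_mem (Finset.mem_coe.1 hy))))
    refine ⟨x, hX'sub hxX', ?_⟩
    intro y hy
    rcases Finset.mem_insert.1 hy with rfl | hyS
    · exact lt_of_lt_of_le hβδ hxX'.2
    · exact hx y hyS

/-- Compactness (finite intersection property) upgrade to the closed level over all of `Y`. -/
lemma komiya_fip {X : Set E} {Y : Set F} (hXcomp : IsCompact X) {g : E → F → ℝ}
    (hgx : ∀ y ∈ Y, ContinuousOn (fun x => g x y) X) (c : ℝ)
    (h : ∀ β < c, ∀ S : Finset F, ↑S ⊆ Y → ∃ x ∈ X, ∀ y ∈ S, β ≤ g x y)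
    (hne : X.Nonempty) :
    ∃ x ∈ X, ∀ y ∈ Y, c ≤ g x y := by
  classical
  by_contra hcon
  push_neg at hcon
  set Z : F × ℝ → Set E := fun p =>
    if p.1 ∈ Y ∧ p.2 < c then X ∩ (fun x => g x p.1) ⁻¹' (Ici p.2) else Set.univ with hZdef
  have hZc : ∀ p, IsClosed (Z p) := by
    intro p
    simp only [hZdef]
    split_ifs with hp
    · exact (hgx p.1 hp.1).preimage_isClosed_of_isClosed hXcomp.isClosed isClosed_Ici
    · exact isClosed_univ
  have hempty : (X ∩ ⋂ p, Z p) = ∅ := by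
    rw [Set.eq_empty_iff_forall_notMem]
    rintro x ⟨hxX, hxZ⟩
    have hall : ∀ y ∈ Y, c ≤ g x y := by
      intro y hy
      by_contra hlt
      push_neg at hlt
      set β : ℝ := (g x y + c) / 2 with hβdef
      have hβc : β < c := by simp only [hβdef]; linarith
      have hmem : x ∈ Z (y, β) := Set.mem_iInter.1 hxZ (y, β)
      simp only [hZdef, if_pos (And.intro hy hβc)] at hmem
      have : β ≤ g x y := hmem.2
      simp only [hβdef] at this
      linarith
    obtain ⟨y, hy, hlt⟩ := hcon x hxX
    exact absurd (hall y hy) (not_le.2 hlt)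
  obtain ⟨t, ht⟩ := hXcomp.elim_finite_subfamily_closed Z hZc hempty
  set valid : Finset (F × ℝ) := t.filter (fun p => p.1 ∈ Y ∧ p.2 < c) with hvaliddef
  set B : Finset ℝ := insert (c - 1) (valid.image Prod.snd) with hBdef
  have hBne : B.Nonempty := ⟨c - 1, by simp [hBdef]⟩
  set β0 : ℝ := B.max' hBne with hβ0def
  have hβ0c : β0 < c := by
    have := B.max'_mem hBne
    rw [← hβ0def] at this
    simp only [hBdef, Finset.mem_insert, Finset.mem_image] at this
    rcases this with h1 | ⟨p, hp, h2⟩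
    · linarith
    · rw [← h2]
      exact (Finset.mem_filter.1 hp).2.2
  set S : Finset F := valid.image Prod.fst with hSdef
  have hSY : ↑S ⊆ Y := by
    intro y hy
    simp only [hSdef, Finset.coe_image, Set.mem_image, Finset.mem_coe] at hy
    obtain ⟨p, hp, rfl⟩ := hy
    exact (Finset.mem_filter.1 hp).2.1
  obtain ⟨x, hxX, hx⟩ := h β0 hβ0c S hSY
  have : x ∈ X ∩ ⋂ p ∈ t, Z p := by
    refine ⟨hxX, Set.mem_iInter₂.2 fun p hp => ?_⟩
    simp only [hZdef]
    split_ifs with hcond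
    · refine ⟨hxX, ?_⟩
      have hpvalid : p ∈ valid := Finset.mem_filter.2 ⟨hp, hcond⟩
      have hpy : p.1 ∈ S := Finset.mem_image.2 ⟨p, hpvalid, rfl⟩
      have h1 : β0 ≤ g x p.1 := hx p.1 hpy
      have h2 : p.2 ≤ β0 :=
        Finset.le_max' B p.2 (by
          simp only [hBdef, Finset.mem_insert, Finset.mem_image]
          exact Or.inr ⟨p, hpvalid, rfl⟩)
      exact Set.mem_Ici.2 (le_trans h2 h1)
    · exact Set.mem_univ x
  rw [ht] at this
  exact this

/-- Komiya/Sion: if for every `y` some `x` beats level `c`, then a single `x`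
achieves level `c` uniformly over `Y`. -/
lemma komiya_main {X : Set E} {Y : Set F}
    (hXne : X.Nonempty) (hXcomp : IsCompact X) (hYconv : Convex ℝ Y)
    {g : E → F → ℝ} (hg : ContinuousOn (fun p : E × F => g p.1 p.2) (X ×ˢ Y))
    (hsup : ∀ y ∈ Y, ∀ r : ℝ, Convex ℝ {x ∈ X | r ≤ g x y})
    (hsub : ∀ x ∈ X, ∀ y1 ∈ Y, ∀ y2 ∈ Y, ∀ z ∈ segment ℝ y1 y2,
      g x z ≤ max (g x y1) (g x y2))
    (c : ℝ) (hP : ∀ y ∈ Y, ∃ x ∈ X, c < g x y) :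
    ∃ x ∈ X, ∀ y ∈ Y, c ≤ g x y := by
  refine komiya_fip hXcomp (fun y hy => cont_fst hg hy) c ?_ hXne
  intro β hβ S hS
  obtain ⟨x, hx, h⟩ := komiya_finset hYconv g S X hXne hXcomp hg hsup hsub c β hβ hP hS
  exact ⟨x, hx, fun y hy => (h y hy).le⟩

/-- Boundary value lemma: if some `y0` keeps everything `≤ c` while some pair reaches `≥ c`,
then by connectedness there is `y'` where the max equals exactly `c`. -/
lemma exists_boundary {E F : Type*} [TopologicalSpace E] [TopologicalSpace F]
    [T2Space E] [T2Space F]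
    {X : Set E} {Y : Set F} (hXcomp : IsCompact X) (hYcomp : IsCompact Y)
    (hYpre : IsPreconnected Y)
    {g : E → F → ℝ} (hg : ContinuousOn (fun p : E × F => g p.1 p.2) (X ×ˢ Y)) (c : ℝ)
    (h1 : ∃ y0 ∈ Y, ∀ x ∈ X, g x y0 ≤ c) (h2 : ∃ p ∈ X, ∃ q ∈ Y, c ≤ g p q) :
    ∃ x' ∈ X, ∃ y' ∈ Y, g x' y' = c ∧ ∀ x ∈ X, g x y' ≤ c := by
  set T1 : Set F := {y ∈ Y | ∃ x ∈ X, c ≤ g x y} with hT1def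
  set T2 : Set F := Y ∩ ⋂ x ∈ X, {y ∈ Y | g x y ≤ c} with hT2def
  have hT1comp : IsCompact T1 := compact_slice hXcomp hYcomp hg c
  have hT2closed : IsClosed T2 := by
    refine IsClosed.inter hYcomp.isClosed (isClosed_biInter fun x hx => ?_)
    have hcx : ContinuousOn (fun y => g x y) Y := by
      have := hg.comp ((continuous_const.prodMk continuous_id).continuousOn
        (s := Y) (f := fun y : F => (x, y))) (fun y hy => ⟨hx, hy⟩)
      exact this
    have := hcx.preimage_isClosed_of_isClosed hYcomp.isClosed (isClosed_Iic (a := c))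
    exact this
  have hT2comp : IsCompact T2 := hYcomp.of_isClosed_subset hT2closed Set.inter_subset_left
  by_cases hint : (T1 ∩ T2).Nonempty
  · obtain ⟨y', ⟨hy'Y, x', hx'X, hge⟩, hy'T2⟩ := hint
    have hall : ∀ x ∈ X, g x y' ≤ c := by
      intro x hx
      have := Set.mem_iInter₂.1 hy'T2.2 x hx
      exact this.2
    exact ⟨x', hx'X, y', hy'Y, le_antisymm (hall x' hx'X) hge, hall⟩
  · exfalso
    have hdisj : Disjoint T1 T2 := Set.disjoint_iff_inter_eq_empty.2
      (Set.not_nonempty_iff_eq_empty.1 hint)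
    have hcover : Y ⊆ T1 ∪ T2 := by
      intro y hy
      by_cases hex : ∃ x ∈ X, c ≤ g x y
      · exact Or.inl ⟨hy, hex⟩
      · push_neg at hex
        exact Or.inr ⟨hy, Set.mem_iInter₂.2 fun x hx => ⟨hy, (hex x hx).le⟩⟩
    obtain ⟨p, hpX, q, hqY, hpq⟩ := h2
    obtain ⟨y0, hy0Y, hy0⟩ := h1
    have hqT1 : q ∈ T1 := ⟨hqY, p, hpX, hpq⟩
    have hy0T2 : y0 ∈ T2 := ⟨hy0Y, Set.mem_iInter₂.2 fun x hx => ⟨hy0Y, hy0 x hx⟩⟩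
    rcases preconn_split hYpre hT1comp hT2comp hdisj hcover with h | h
    · exact Set.disjoint_left.1 hdisj (h hy0Y) hy0T2
    · exact Set.disjoint_left.1 hdisj hqT1 (h hqY)

end Komiya

/-- A two-player game over strategy sets `X ⊆ E`, `Y ⊆ F` with payoffs `U, V` is
feasible: for every pair of outside options admitting a feasible contract, there
exists a constrained Nash equilibrium. -/
def FeasibleOn {E F : Type*} (X : Set E) (Y : Set F) (U V : E → F → ℝ) : Prop :=
  ∀ u0 v0 : ℝ, (∃ x ∈ X, ∃ y ∈ Y, u0 ≤ U x y ∧ v0 ≤ V x y) →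
    ∃ x' ∈ X, ∃ y' ∈ Y, u0 ≤ U x' y' ∧ v0 ≤ V x' y' ∧
      (∀ x ∈ X, U x' y' < U x y' → V x y' < v0) ∧
      (∀ y ∈ Y, V x' y' < V x' y → U x' y < u0)

/-- A zero-sum game over nonempty compact convex subsets of Hausdorff real
topological vector spaces whose payoff is continuous, quasi-concave in the first
variable and quasi-convex in the second variable, is feasible. -/
theorem sion_zero_sum_feasible
    {E F : Type*}
    [AddCommGroup E] [Module ℝ E] [TopologicalSpace E]
    [IsTopologicalAddGroup E] [ContinuousSMul ℝ E] [T2Space E]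
    [AddCommGroup F] [Module ℝ F] [TopologicalSpace F]
    [IsTopologicalAddGroup F] [ContinuousSMul ℝ F] [T2Space F]
    (X : Set E) (Y : Set F) (hXne : X.Nonempty) (hYne : Y.Nonempty)
    (hXcomp : IsCompact X) (hYcomp : IsCompact Y)
    (hXconv : Convex ℝ X) (hYconv : Convex ℝ Y)
    (g : E → F → ℝ)
    (hg : ContinuousOn (fun p : E × F => g p.1 p.2) (X ×ˢ Y))
    (hqc : ∀ y ∈ Y, QuasiconcaveOn ℝ X fun x => g x y)
    (hqv : ∀ x ∈ X, QuasiconvexOn ℝ Y fun y => g x y) :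
    FeasibleOn X Y g (fun x y => -g x y) := by
  -- transposed game
  set gT : F → E → ℝ := fun y x => -g x y with hgTdef
  have hgT : ContinuousOn (fun p : F × E => gT p.1 p.2) (Y ×ˢ X) := by
    have hswap : ContinuousOn (fun p : F × E => g p.2 p.1) (Y ×ˢ X) :=
      hg.comp (continuous_swap.continuousOn) (fun p hp => ⟨hp.2, hp.1⟩)
    exact hswap.neg
  -- quasi-structure hypotheses in the raw form
  have hsup : ∀ y ∈ Y, ∀ r : ℝ, Convex ℝ {x ∈ X | r ≤ g x y} := fun y hy r => hqc y hy r
  have hsub : ∀ x ∈ X, ∀ y1 ∈ Y, ∀ y2 ∈ Y, ∀ z ∈ segment ℝ y1 y2,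
      g x z ≤ max (g x y1) (g x y2) := by
    intro x hx y1 hy1 y2 hy2 z hz
    have hconv := hqv x hx (max (g x y1) (g x y2))
    have hzmem := hconv.segment_subset ⟨hy1, le_max_left _ _⟩ ⟨hy2, le_max_right _ _⟩ hz
    exact hzmem.2
  have hsupT : ∀ x ∈ X, ∀ r : ℝ, Convex ℝ {y ∈ Y | r ≤ gT y x} := by
    intro x hx r
    have := hqv x hx (-r)
    have heq : {y ∈ Y | r ≤ gT y x} = {y ∈ Y | g x y ≤ -r} := by
      ext y
      simp only [hgTdef, Set.mem_setOf_eq, Set.mem_sep_iff]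
      constructor
      · rintro ⟨h1, h2⟩; exact ⟨h1, by linarith⟩
      · rintro ⟨h1, h2⟩; exact ⟨h1, by linarith⟩
    rw [heq]
    exact this
  have hsubT : ∀ y ∈ Y, ∀ x1 ∈ X, ∀ x2 ∈ X, ∀ z ∈ segment ℝ x1 x2,
      gT y z ≤ max (gT y x1) (gT y x2) := by
    intro y hy x1 hx1 x2 hx2 z hz
    have hconv := hqc y hy (min (g x1 y) (g x2 y))
    have hzmem := hconv.segment_subset ⟨hx1, min_le_left _ _⟩ ⟨hx2, min_le_right _ _⟩ hz
    have hmin : min (g x1 y) (g x2 y) ≤ g z y := hzmem.2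
    simp only [hgTdef]
    rcases le_total (g x1 y) (g x2 y) with h | h
    · rw [min_eq_left h] at hmin
      exact le_max_of_le_left (by linarith)
    · rw [min_eq_right h] at hmin
      exact le_max_of_le_right (by linarith)
  intro u0 v0 ⟨xb, hxb, yb, hyb, hfeas1, hfeas2⟩
  simp only at hfeas2
  have huv : u0 ≤ -v0 := by linarith
  by_cases hB : ∃ y1 ∈ Y, ∀ x ∈ X, g x y1 ≤ u0
  · -- boundary at level u0
    obtain ⟨x', hx', y', hy', heq, hall⟩ :=
      exists_boundary hXcomp hYcomp hYconv.isPreconnected hg u0 hB ⟨xb, hxb, yb, hyb, hfeas1⟩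
    refine ⟨x', hx', y', hy', heq.ge, by simp only; linarith, ?_, ?_⟩
    · intro x hx hlt
      have := hall x hx
      simp only
      linarith
    · intro y hy hlt
      simp only at hlt
      linarith
  by_cases hA : ∃ x1 ∈ X, ∀ y ∈ Y, -v0 ≤ g x1 y
  · -- boundary at level -v0, transposed game
    have h1T : ∃ x1 ∈ X, ∀ y ∈ Y, gT y x1 ≤ v0 := by
      obtain ⟨x1, hx1, h⟩ := hA
      exact ⟨x1, hx1, fun y hy => by simp only [hgTdef]; linarith [h y hy]⟩
    have h2T : ∃ q ∈ Y, ∃ p ∈ X, v0 ≤ gT q p := ⟨yb, hyb, xb, hxb, hfeas2⟩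
    obtain ⟨y', hy', x', hx', heq, hall⟩ :=
      exists_boundary hYcomp hXcomp hXconv.isPreconnected hgT v0 h1T h2T
    simp only [hgTdef] at heq hall
    refine ⟨x', hx', y', hy', by linarith, by simp only; linarith, ?_, ?_⟩
    · intro x hx hlt
      simp only
      linarith
    · intro y hy hlt
      simp only at hlt
      linarith [hall y hy]
  · -- interior case: construct the value using Komiya's lemma
    push_neg at hB hA
    set A : Set ℝ := {c : ℝ | ∃ x ∈ X, ∀ y ∈ Y, c ≤ g x y} with hAdef
    have hu0A : u0 ∈ A := komiya_main hXne hXcomp hYconv hg hsup hsub u0 hB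
    have hAbdd : ∀ c ∈ A, c ≤ -v0 := by
      rintro c ⟨x, hx, h⟩
      obtain ⟨y, hy, hlt⟩ := hA x hx
      linarith [h y hy]
    have hane : A.Nonempty := ⟨u0, hu0A⟩
    have hbdd : BddAbove A := ⟨-v0, fun c hc => hAbdd c hc⟩
    set a : ℝ := sSup A with hadef
    have ha_u0 : u0 ≤ a := le_csSup hbdd hu0A
    have ha_v0 : a ≤ -v0 := csSup_le hane hAbdd
    have haA : ∃ x ∈ X, ∀ y ∈ Y, a ≤ g x y := by
      refine komiya_fip hXcomp (fun y hy => cont_fst hg hy) a ?_ hXne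
      intro β hβ S hS
      obtain ⟨c, hcA, hβc⟩ := exists_lt_of_lt_csSup hane hβ
      obtain ⟨x, hx, h⟩ := hcA
      exact ⟨x, hx, fun y hy => le_trans hβc.le (h y (hS hy))⟩
    have hBc : ∀ c : ℝ, a < c → ∃ y ∈ Y, ∀ x ∈ X, g x y ≤ c := by
      intro c hc
      have hcA : c ∉ A := fun h => absurd (le_csSup hbdd h) (not_le.2 hc)
      simp only [hAdef, Set.mem_setOf_eq] at hcA
      push_neg at hcA
      have hPT : ∀ x ∈ X, ∃ y ∈ Y, -c < gT y x := by
        intro x hx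
        obtain ⟨y, hy, hlt⟩ := hcA x hx
        exact ⟨y, hy, by simp only [hgTdef]; linarith⟩
      obtain ⟨y, hy, h⟩ := komiya_main hYne hYcomp hXconv hgT hsupT hsubT (-c) hPT
      refine ⟨y, hy, fun x hx => ?_⟩
      have := h x hx
      simp only [hgTdef] at this
      linarith
    have haB : ∃ y ∈ Y, ∀ x ∈ X, g x y ≤ a := by
      have := komiya_fip hYcomp (g := gT) (fun x hx => cont_fst hgT hx) (-a) ?_ hYne
      · obtain ⟨y, hy, h⟩ := this
        refine ⟨y, hy, fun x hx => ?_⟩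
        have := h x hx
        simp only [hgTdef] at this
        linarith
      · intro β hβ S hS
        obtain ⟨y, hy, h⟩ := hBc (-β) (by linarith)
        refine ⟨y, hy, fun x hx => ?_⟩
        have := h x (hS hx)
        simp only [hgTdef]
        linarith
    obtain ⟨x', hx', hxall⟩ := haA
    obtain ⟨y', hy', hyall⟩ := haB
    have hval : g x' y' = a := le_antisymm (hyall x' hx') (hxall y' hy')
    refine ⟨x', hx', y', hy', by linarith, by simp only; linarith, ?_, ?_⟩
    · intro x hx hlt
      have := hyall x hx
      simp only
      linarith
    · intro y hy hlt
      simp only at hlt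
      linarith [hxall y hy]
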